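/- Let R be an integral domain, c ∈ R a prime element, and M, M′ free R-modules. If x ∈ M with x ∉ c • M and y ∈ M′ with y ∉ c • M′, then x ⊗ y ∉ c • (M ⊗[R] M′). -/

import Mathlib

open scoped TensorProduct

/-- If every coordinate of `x` w.r.t. a basis is divisible by `c ≠ 0`,
then `x` is divisible by `c`. -/
lemma key_div {R : Type*} [CommRing R] [IsDomain R] {c : R} (hc : c ≠ 0)
    {M ι : Type*} [AddCommGroup M] [Module R M] (b : Module.Basis ι R M) (x : M)
    (h : ∀ i, c ∣ b.repr x i) : ∃ m : M, x = c • m := by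
  classical
  refine ⟨b.repr.symm ((b.repr x).mapRange (fun a =>
      if ha : c ∣ a then Classical.choose ha else 0) (by
        show (if ha : c ∣ (0:R) then Classical.choose ha else 0) = 0
        rw [dif_pos (dvd_zero c)]
        have := (Classical.choose_spec (dvd_zero c)).symm
        exact (mul_eq_zero.mp this).resolve_left hc)), ?_⟩
  apply b.repr.injective
  rw [map_smul, LinearEquiv.apply_symm_apply]
  ext i
  have hi := h i
  simp only [Finsupp.coe_smul, Pi.smul_apply, Finsupp.mapRange_apply, dif_pos hi,
    smul_eq_mul]
  exact Classical.choose_spec hi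

/-- Let `R` be an integral domain, `c ∈ R` a prime element,
and `M`, `M′` free `R`-modules.  If `x ∈ M` with `x ∉ c • M` and `y ∈ M′` with
`y ∉ c • M′`, then `x ⊗ y ∉ c • (M ⊗[R] M′)`. -/
theorem stmt16 {R : Type*} [CommRing R] [IsDomain R] (c : R) (hc : Prime c)
    {M M' : Type*} [AddCommGroup M] [Module R M] [AddCommGroup M'] [Module R M']
    [Module.Free R M] [Module.Free R M']
    (x : M) (y : M')
    (hx : ¬∃ m : M, x = c • m) (hy : ¬∃ m : M', y = c • m) :
    ¬∃ w : M ⊗[R] M', x ⊗ₜ[R] y = c • w := by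
  classical
  have b := Module.Free.chooseBasis R M
  have b' := Module.Free.chooseBasis R M'
  obtain ⟨i, hi⟩ : ∃ i, ¬ c ∣ b.repr x i := by
    by_contra h
    push_neg at h
    exact hx (key_div hc.ne_zero b x h)
  obtain ⟨j, hj⟩ : ∃ j, ¬ c ∣ b'.repr y j := by
    by_contra h
    push_neg at h
    exact hy (key_div hc.ne_zero b' y h)
  rintro ⟨w, hw⟩
  have hrep : (b.tensorProduct b').repr (x ⊗ₜ[R] y) (i, j) =
      c * (b.tensorProduct b').repr w (i, j) := by
    rw [hw, map_smul]; rfl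
  rw [Module.Basis.tensorProduct_repr_tmul_apply, smul_eq_mul, mul_comm] at hrep
  have : c ∣ b.repr x i * b'.repr y j := ⟨_, hrep⟩
  rcases hc.2.2 _ _ this with h | h
  · exact hi h
  · exact hj h
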